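/- Let a, b, c be real numbers with b² − 4ac < 0, let d ≥ 3, and let f_0, f_1, …, f_d be real numbers with f_0 > 0, f_k ≥ 0 for all 0 ≤ k ≤ d, and a·f_k + b·f_{k+1} + c·f_{k+2} = 0 for all 0 ≤ k ≤ d−2. Then every complex zero of the local polynomial P_f(z) = Σ_{k=0}^d C(d,k)·f_k·z^k is a strictly negative real number; consequently there exists ε > 0 such that P_f(z) ≠ 0 for all z ∈ ℂ with Re z ≥ −ε. -/

import Mathlib

open Finset

/-- Case `b² - 4ac < 0`: the local polynomial `P_f(z) = ∑ C(d,k) f_k z^k` of a nonnegative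
signature with `f_0 > 0` satisfying the recurrence has only strictly negative real zeros;
consequently it is `H_ε`-stable for some `ε > 0`. -/
theorem local_polynomial_stable_complex_roots (a b c : ℝ) (hdisc : b ^ 2 - 4 * a * c < 0)
    (d : ℕ) (hd : 3 ≤ d) (f : ℕ → ℝ) (hf0 : 0 < f 0) (hnn : ∀ k ≤ d, 0 ≤ f k)
    (hrec : ∀ k : ℕ, k + 2 ≤ d → a * f k + b * f (k + 1) + c * f (k + 2) = 0) :
    (∀ z : ℂ, ∑ k ∈ Finset.range (d + 1), (d.choose k : ℂ) * (f k : ℂ) * z ^ k = 0 →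
      z.im = 0 ∧ z.re < 0) ∧
    ∃ ε : ℝ, 0 < ε ∧ ∀ z : ℂ, -ε ≤ z.re →
      ∑ k ∈ Finset.range (d + 1), (d.choose k : ℂ) * (f k : ℂ) * z ^ k ≠ 0 := by
  have hc : c ≠ 0 := by
    intro h
    rw [h] at hdisc
    nlinarith [sq_nonneg b]
  have hD : 0 < 4 * a * c - b ^ 2 := by linarith
  obtain ⟨μ, hμim_ne, hroot⟩ : ∃ μ : ℂ, μ.im ≠ 0 ∧ (a : ℂ) + ↑b * μ + ↑c * μ ^ 2 = 0 := by
    have hs_pos : 0 < Real.sqrt (4 * a * c - b ^ 2) := Real.sqrt_pos.mpr hD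
    have hs_sq : Real.sqrt (4 * a * c - b ^ 2) ^ 2 = 4 * a * c - b ^ 2 := Real.sq_sqrt hD.le
    set s : ℝ := Real.sqrt (4 * a * c - b ^ 2)
    refine ⟨⟨-b / (2 * c), s / (2 * c)⟩, ?_, ?_⟩
    · exact div_ne_zero hs_pos.ne' (by simpa using hc)
    · rw [Complex.ext_iff]
      constructor
      · simp only [Complex.add_re, Complex.mul_re, Complex.mul_im, pow_two,
          Complex.ofReal_re, Complex.ofReal_im, Complex.zero_re]
        have e1 : c * s ^ 2 = c * (4 * a * c - b ^ 2) := by rw [hs_sq]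
        have e2 : c ^ 2 * s ^ 2 = c ^ 2 * (4 * a * c - b ^ 2) := by rw [hs_sq]
        field_simp
        linear_combination (-1:ℝ) * e1
      · simp only [Complex.add_im, Complex.mul_re, Complex.mul_im, pow_two,
          Complex.ofReal_re, Complex.ofReal_im, Complex.zero_im]
        field_simp
        ring
  obtain ⟨γ, hγre, hγμre⟩ : ∃ γ : ℂ, γ.re = f 0 ∧ (γ * μ).re = f 1 := by
    refine ⟨⟨f 0, (f 0 * μ.re - f 1) / μ.im⟩, rfl, ?_⟩
    rw [Complex.mul_re]
    field_simp
    ring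
  have hγ_ne : γ ≠ 0 := by
    intro h
    rw [h] at hγre
    simp at hγre
    exact hf0.ne' hγre.symm
  have key : ∀ k, k ≤ d → f k = (γ * μ ^ k).re := by
    intro k
    induction k using Nat.twoStepInduction with
    | zero => intro _; simpa using hγre.symm
    | one => intro _; rw [pow_one]; exact hγμre.symm
    | more n ih1 ih2 =>
      intro h
      have h1 : n ≤ d := by omega
      have h2 : n + 1 ≤ d := by omega
      have e1 := hrec n h
      have e2 : (↑a * (γ * μ ^ n) + ↑b * (γ * μ ^ (n + 1)) + ↑c * (γ * μ ^ (n + 2))).re = 0 := by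
        have h3 : (↑a * (γ * μ ^ n) + ↑b * (γ * μ ^ (n + 1)) + ↑c * (γ * μ ^ (n + 2))) = 0 := by
          linear_combination (γ * μ ^ n) * hroot
        rw [h3, Complex.zero_re]
      simp only [Complex.add_re, Complex.re_ofReal_mul] at e2
      rw [← ih1 h1, ← ih2 h2] at e2
      have h4 : c * f (n + 2) = c * (γ * μ ^ (n + 2)).re := by linarith
      exact mul_left_cancel₀ hc h4
  have hsum : ∀ z : ℂ, ∑ k ∈ Finset.range (d + 1), (d.choose k : ℂ) * (f k : ℂ) * z ^ k
      = (γ * (μ * z + 1) ^ d + (starRingEnd ℂ) γ * ((starRingEnd ℂ) μ * z + 1) ^ d) / 2 := by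
    intro z
    rw [add_pow, add_pow, Finset.mul_sum, Finset.mul_sum, ← Finset.sum_add_distrib,
      Finset.sum_div]
    apply Finset.sum_congr rfl
    intro k hk
    have hk' : k ≤ d := Nat.lt_succ_iff.mp (Finset.mem_range.mp hk)
    have hf : (f k : ℂ) = (γ * μ ^ k + (starRingEnd ℂ) (γ * μ ^ k)) / 2 := by
      rw [Complex.add_conj, key k hk']
      push_cast
      ring
    rw [hf, map_mul, map_pow]
    ring
  have hmain : ∀ z : ℂ, ∑ k ∈ Finset.range (d + 1), (d.choose k : ℂ) * (f k : ℂ) * z ^ k = 0 →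
      z.im = 0 ∧ z.re < 0 := by
    intro z hz0
    have hz : (γ * (μ * z + 1) ^ d + (starRingEnd ℂ) γ * ((starRingEnd ℂ) μ * z + 1) ^ d) / 2 = 0 := by
      rw [← hsum]; exact hz0
    have hz' : γ * (μ * z + 1) ^ d = -((starRingEnd ℂ) γ * ((starRingEnd ℂ) μ * z + 1) ^ d) := by
      field_simp at hz
      linear_combination hz
    have habs : ‖μ * z + 1‖ = ‖(starRingEnd ℂ) μ * z + 1‖ := by
      have h1 : ‖γ‖ * ‖μ * z + 1‖ ^ d
          = ‖γ‖ * ‖(starRingEnd ℂ) μ * z + 1‖ ^ d := by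
        have h0 := congrArg norm hz'
        simpa [norm_mul, norm_pow, Complex.norm_conj] using h0
      have h2 : ‖μ * z + 1‖ ^ d = ‖(starRingEnd ℂ) μ * z + 1‖ ^ d :=
        mul_left_cancel₀ (by simpa [norm_ne_zero_iff] using hγ_ne) h1
      exact (pow_left_inj₀ (norm_nonneg _) (norm_nonneg _) (by omega)).mp h2
    have hnsq : Complex.normSq (μ * z + 1) = Complex.normSq ((starRingEnd ℂ) μ * z + 1) := by
      rw [← Complex.sq_norm, ← Complex.sq_norm, habs]
    have him : z.im = 0 := by
      simp only [Complex.normSq_apply, Complex.add_re, Complex.add_im, Complex.mul_re,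
        Complex.mul_im, Complex.conj_re, Complex.conj_im, Complex.one_re, Complex.one_im] at hnsq
      have h4 : μ.im * z.im = 0 := by nlinarith [hnsq]
      exact (mul_eq_zero.mp h4).resolve_left hμim_ne
    refine ⟨him, ?_⟩
    by_contra hre
    push_neg at hre
    have hzre : z = ((z.re : ℝ) : ℂ) := Complex.ext rfl (by simp [him])
    rw [hzre] at hz0
    have hreal : ∑ k ∈ Finset.range (d + 1), (d.choose k : ℝ) * f k * z.re ^ k = 0 := by
      exact_mod_cast hz0
    have hpos : 0 < ∑ k ∈ Finset.range (d + 1), (d.choose k : ℝ) * f k * z.re ^ k := by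
      apply Finset.sum_pos'
      · intro i hi
        have hi' : i ≤ d := Nat.lt_succ_iff.mp (Finset.mem_range.mp hi)
        have := hnn i hi'
        positivity
      · refine ⟨0, Finset.mem_range.mpr (by omega), by simpa using hf0⟩
    linarith
  refine ⟨hmain, ?_⟩
  set p : Polynomial ℂ := ∑ k ∈ Finset.range (d + 1),
    Polynomial.C ((d.choose k : ℂ) * (f k : ℂ)) * Polynomial.X ^ k with hp_def
  have heval : ∀ z : ℂ, p.eval z = ∑ k ∈ Finset.range (d + 1), (d.choose k : ℂ) * (f k : ℂ) * z ^ k := by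
    intro z
    simp [hp_def, Polynomial.eval_finset_sum]
  have hp_ne : p ≠ 0 := by
    intro h
    have h0 : p.eval 0 = 0 := by rw [h]; simp
    rw [heval 0] at h0
    rw [Finset.sum_eq_single 0 (fun k _ hk => by simp [zero_pow hk]) (by simp)] at h0
    simp at h0
    exact hf0.ne' h0
  set S : Finset ℂ := p.roots.toFinset with hS_def
  have hSroots : ∀ r ∈ S, r.re < 0 := by
    intro r hr
    have hev : p.eval r = 0 := (Polynomial.mem_roots hp_ne).mp (Multiset.mem_toFinset.mp hr)
    exact (hmain r (by rw [← heval]; exact hev)).2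
  have hmem : ∀ z : ℂ, (∑ k ∈ Finset.range (d + 1), (d.choose k : ℂ) * (f k : ℂ) * z ^ k = 0) → z ∈ S := by
    intro z hz
    apply Multiset.mem_toFinset.mpr
    rw [Polynomial.mem_roots hp_ne]
    rw [Polynomial.IsRoot, heval]; exact hz
  rcases S.eq_empty_or_nonempty with hS | hS
  · refine ⟨1, one_pos, fun z _ hz => ?_⟩
    have hin := hmem z hz
    rw [hS] at hin
    simp at hin
  · refine ⟨S.inf' hS (fun r => -r.re) / 2, ?_, fun z hzre hz => ?_⟩
    · have : 0 < S.inf' hS (fun r => -r.re) := by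
        rw [Finset.lt_inf'_iff]
        intro r hr
        have := hSroots r hr
        linarith
      linarith
    · have hin := hmem z hz
      have h1 : S.inf' hS (fun r => -r.re) ≤ -z.re := Finset.inf'_le _ hin
      have h2 : 0 < S.inf' hS (fun r => -r.re) := by
        rw [Finset.lt_inf'_iff]
        intro r hr
        have := hSroots r hr
        linarith
      linarith
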